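/- arXiv:2303.06789 — 2 statements merged into one kernel-verified Lean document; each statement's English description precedes it below -/
import Mathlib

section
/- For every k ≥ 2, the k × k grid graph Grid(k) has treewidth exactly k. -/
/-- A tree decomposition of a simple graph `G` on vertex type `V`, with bags indexed by the
nodes of a finite tree `T` on `Fin n`: every vertex is in some bag, every edge has both
endpoints in some bag, and for each vertex the set of nodes whose bag contains it induces a
connected (hence subtree) subgraph of `T`. -/
def IsTreeDecomp {V : Type} (G : SimpleGraph V) {n : ℕ}
    (T : SimpleGraph (Fin n)) (bag : Fin n → Finset V) : Prop :=
  T.IsTree ∧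
  (∀ v : V, ∃ i, v ∈ bag i) ∧
  (∀ u v : V, G.Adj u v → ∃ i, u ∈ bag i ∧ v ∈ bag i) ∧
  (∀ v : V, (T.induce {i | v ∈ bag i}).Connected)

/-- The treewidth of `G`: the least `w` such that `G` admits a tree decomposition all of whose
bags have at most `w + 1` vertices (i.e. of width at most `w`). -/
noncomputable def treewidth {V : Type} (G : SimpleGraph V) : ℕ :=
  sInf {w : ℕ | ∃ (n : ℕ) (T : SimpleGraph (Fin n)) (bag : Fin n → Finset V),
    IsTreeDecomp G T bag ∧ ∀ i, (bag i).card ≤ w + 1}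

/-- The pathwidth of `G`: the least `w` such that `G` admits a tree decomposition along a path
all of whose bags have at most `w + 1` vertices (i.e. a path decomposition of width at most
`w`). -/
noncomputable def pathwidth {V : Type} (G : SimpleGraph V) : ℕ :=
  sInf {w : ℕ | ∃ (n : ℕ) (bag : Fin n → Finset V),
    IsTreeDecomp G (SimpleGraph.pathGraph n) bag ∧ ∀ i, (bag i).card ≤ w + 1}

/-- The `k × k` grid graph: vertices are pairs in `Fin k × Fin k`, two vertices being adjacent
if and only if they agree in one coordinate and differ by exactly `1` in the other. -/
def gridGraph (k : ℕ) : SimpleGraph (Fin k × Fin k) :=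
  SimpleGraph.fromRel (fun a b =>
    (a.1 = b.1 ∧ (a.2 : ℕ) + 1 = (b.2 : ℕ)) ∨ ((a.1 : ℕ) + 1 = (b.1 : ℕ) ∧ a.2 = b.2))

open SimpleGraph

section Helpers
variable {α : Type*}

lemma reach_closed {H : SimpleGraph α} {P : α → Prop}
    (hcl : ∀ x y, H.Adj x y → P x → P y) {a b : α} (h : H.Reachable a b) (ha : P a) : P b := by
  obtain ⟨p⟩ := h
  induction p with
  | nil => exact ha
  | cons h p ih => exact ih (hcl _ _ h ha)

def delV (T : SimpleGraph α) (t : α) : SimpleGraph α where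
  Adj a b := T.Adj a b ∧ a ≠ t ∧ b ≠ t
  symm := ⟨fun a b => by tauto⟩
  loopless := ⟨fun a h => T.irrefl h.1⟩

lemma delV_reach_of_walk {T : SimpleGraph α} {t : α} {a b : α} (p : T.Walk a b)
    (hp : t ∉ p.support) : (delV T t).Reachable a b := by
  induction p with
  | nil => rfl
  | @cons u v w h p ih =>
    simp only [SimpleGraph.Walk.support_cons, List.mem_cons] at hp
    push_neg at hp
    have hv : t ∉ p.support := hp.2
    have : (delV T t).Adj u v := ⟨h, Ne.symm hp.1, by
      intro hvt; exact hv (hvt ▸ p.start_mem_support)⟩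
    exact (SimpleGraph.Adj.reachable this).trans (ih hv)

lemma delV_reach_of_induce {T : SimpleGraph α} {t : α} {S : Set α} (ht : t ∉ S)
    {a b : S} (h : (T.induce S).Reachable a b) : (delV T t).Reachable a.val b.val := by
  let hom : T.induce S →g delV T t :=
    ⟨Subtype.val, fun {x y} hxy => ⟨hxy, fun hx => ht (hx ▸ x.2), fun hy => ht (hy ▸ y.2)⟩⟩
  exact h.map hom

/-- A set `B` is connected within `G`. -/
def ConnIn (G : SimpleGraph α) (B : Set α) : Prop :=
  ∀ u ∈ B, ∀ v ∈ B, Relation.ReflTransGen (fun a b => G.Adj a b ∧ a ∈ B ∧ b ∈ B) u v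

end Helpers


section Bramble

variable {V : Type} {G : SimpleGraph V} {n : ℕ} {T : SimpleGraph (Fin n)}
  {bag : Fin n → Finset V}

/-- If `v` is not in `bag t`, then any two nodes whose bags contain `v` are connected
avoiding `t`. -/
lemma same_vertex_reach (hdec : IsTreeDecomp G T bag) {t : Fin n} {v : V}
    (hvt : v ∉ bag t) {i j : Fin n} (hi : v ∈ bag i) (hj : v ∈ bag j) :
    (delV T t).Reachable i j := by
  have hc := hdec.2.2.2 v
  have ht : t ∉ {i | v ∈ bag i} := hvt
  exact delV_reach_of_induce ht (hc.preconnected ⟨i, hi⟩ ⟨j, hj⟩)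

/-- If the connected set `B` avoids `bag t`, all nodes whose bags meet `B` are mutually
reachable avoiding `t`. -/
lemma conn_set_reach (hdec : IsTreeDecomp G T bag) {t : Fin n} {B : Set V}
    (hB : ConnIn G B) (hBt : ∀ v ∈ B, v ∉ bag t)
    {u v : V} (hu : u ∈ B) (hv : v ∈ B) {i j : Fin n} (hi : u ∈ bag i) (hj : v ∈ bag j) :
    (delV T t).Reachable i j := by
  have key : ∀ x, Relation.ReflTransGen (fun a b => G.Adj a b ∧ a ∈ B ∧ b ∈ B) u x →
      ∀ j', x ∈ bag j' → (delV T t).Reachable i j' := by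
    intro x hx
    induction hx with
    | refl => exact fun j' hj' => same_vertex_reach hdec (hBt u hu) hi hj'
    | @tail w x huw hwx ih =>
      intro j' hj'
      obtain ⟨m, hwm, hxm⟩ := hdec.2.2.1 w x hwx.1
      exact (ih m hwm).trans (same_vertex_reach hdec (hBt x hwx.2.2) hxm hj')
  exact key v (hB u hu v hv) j hj

/-- For each node `t` with a bramble element `B` avoiding `bag t`, there is a neighbour `s`
of `t` such that every node whose bag meets `B` is reachable from `s` avoiding `t`. -/
lemma exists_direction (hdec : IsTreeDecomp G T bag) {t : Fin n} {B : Set V}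
    (hB : ConnIn G B) (hBne : B.Nonempty) (hBt : ∀ v ∈ B, v ∉ bag t) :
    ∃ s, T.Adj t s ∧ ∀ j, (∃ v ∈ B, v ∈ bag j) → (delV T t).Reachable s j := by
  obtain ⟨v, hv⟩ := hBne
  obtain ⟨i, hi⟩ := hdec.2.1 v
  have hit : i ≠ t := fun h => hBt v hv (h ▸ hi)
  obtain ⟨w⟩ := hdec.1.isConnected.preconnected t i
  obtain ⟨p, hp⟩ : ∃ p : T.Walk t i, p.IsPath := ⟨w.toPath, w.toPath.2⟩
  cases p with
  | nil => exact absurd rfl hit.symm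
  | @cons _ s _ hadj q =>
    rw [SimpleGraph.Walk.cons_isPath_iff] at hp
    refine ⟨s, hadj, fun j ⟨u, hu, huj⟩ => ?_⟩
    exact (delV_reach_of_walk q hp.2).trans (conn_set_reach hdec hB hBt hv hu hi huj)

end Bramble

section BrambleMain

variable {V : Type} {G : SimpleGraph V} {n : ℕ} {T : SimpleGraph (Fin n)}
  {bag : Fin n → Finset V}

theorem bramble_bound {𝓑 : Set (Set V)}
    (hconn : ∀ B ∈ 𝓑, ConnIn G B) (hne : ∀ B ∈ 𝓑, B.Nonempty)
    (htouch : ∀ B ∈ 𝓑, ∀ C ∈ 𝓑, (B ∩ C).Nonempty ∨ ∃ u ∈ B, ∃ v ∈ C, G.Adj u v)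
    (hdec : IsTreeDecomp G T bag)
    (hmiss : ∀ i : Fin n, ∃ B ∈ 𝓑, ∀ v ∈ B, v ∉ bag i) : False := by
  classical
  choose Bf hBf hBfm using hmiss
  choose f hf1 hf2 using fun t =>
    exists_direction hdec (hconn _ (hBf t)) (hne _ (hBf t)) (hBfm t)
  have hT := hdec.1
  have hcard : T.edgeFinset.card + 1 = Fintype.card (Fin n) := hT.card_edgeFinset
  obtain ⟨t, -, t', -, htt', heq⟩ :=
    Finset.exists_ne_map_eq_of_card_lt_of_maps_to
      (s := (Finset.univ : Finset (Fin n))) (t := T.edgeFinset)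
      (f := fun t => s(t, f t))
      (by simpa using (by omega : T.edgeFinset.card < Fintype.card (Fin n)))
      (fun t _ => SimpleGraph.mem_edgeFinset.mpr (hf1 t))
  rw [Sym2.eq_iff] at heq
  obtain ⟨rfl, -⟩ | ⟨h1, h2⟩ := heq
  · exact htt' rfl
  -- h1 : t = f t', h2 : f t = t'
  -- find a common node i whose bag meets both bramble sets
  obtain ⟨i, hi1, hi2⟩ : ∃ i, (∃ v ∈ Bf t, v ∈ bag i) ∧ ∃ v ∈ Bf t', v ∈ bag i := by
    rcases htouch _ (hBf t) _ (hBf t') with ⟨v, hv1, hv2⟩ | ⟨u, hu, v, hv, hadj⟩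
    · obtain ⟨i, hi⟩ := hdec.2.1 v
      exact ⟨i, ⟨v, hv1, hi⟩, ⟨v, hv2, hi⟩⟩
    · obtain ⟨i, hui, hvi⟩ := hdec.2.2.1 u v hadj
      exact ⟨i, ⟨u, hu, hui⟩, ⟨v, hv, hvi⟩⟩
  have r1 : (delV T t).Reachable t' i := h2 ▸ hf2 t i hi1
  have r2 : (delV T t').Reachable t i := h1 ▸ hf2 t' i hi2
  have hadj : T.Adj t t' := h2 ▸ hf1 t
  have hbridge := (SimpleGraph.isAcyclic_iff_forall_edge_isBridge.mp hT.IsAcyclic)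
    (T.mem_edgeSet.mpr hadj)
  rw [SimpleGraph.isBridge_iff] at hbridge
  have mono1 : delV T t ≤ T \ SimpleGraph.fromEdgeSet {s(t, t')} := by
    intro a b ⟨hab, hat, hbt⟩
    rw [SimpleGraph.sdiff_adj]
    refine ⟨hab, fun h => ?_⟩
    rw [SimpleGraph.fromEdgeSet_adj, Set.mem_singleton_iff, Sym2.eq_iff] at h
    rcases h.1 with ⟨ha, hb⟩ | ⟨ha, hb⟩
    · exact hat ha
    · exact hbt hb
  have mono2 : delV T t' ≤ T \ SimpleGraph.fromEdgeSet {s(t, t')} := by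
    intro a b ⟨hab, hat, hbt⟩
    rw [SimpleGraph.sdiff_adj]
    refine ⟨hab, fun h => ?_⟩
    rw [SimpleGraph.fromEdgeSet_adj, Set.mem_singleton_iff, Sym2.eq_iff] at h
    rcases h.1 with ⟨ha, hb⟩ | ⟨ha, hb⟩
    · exact hbt hb
    · exact hat ha
  exact hbridge ((r2.mono mono2).trans (r1.mono mono1).symm)

end BrambleMain
open SimpleGraph


variable {k : ℕ}

lemma grid_adj_right {i a b : Fin k} (h : (a : ℕ) + 1 = b) :
    (gridGraph k).Adj (i, a) (i, b) := by
  refine ⟨?_, Or.inl (Or.inl ⟨rfl, h⟩)⟩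
  intro hc
  injection hc with h1 h2
  subst h2
  omega

lemma grid_adj_down {i j c : Fin k} (h : (i : ℕ) + 1 = j) :
    (gridGraph k).Adj (i, c) (j, c) := by
  refine ⟨?_, Or.inl (Or.inr ⟨h, rfl⟩)⟩
  intro hc
  injection hc with h1 h2
  subst h1
  omega

abbrev gridRel (k : ℕ) (B : Set (Fin k × Fin k)) :
    Fin k × Fin k → Fin k × Fin k → Prop :=
  fun u v => (gridGraph k).Adj u v ∧ u ∈ B ∧ v ∈ B

lemma gridRel_symm {B : Set (Fin k × Fin k)} : Symmetric (gridRel k B) :=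
  fun _ _ h => ⟨h.1.symm, h.2.2, h.2.1⟩

lemma row_rtg {B : Set (Fin k × Fin k)} (i : Fin k) :
    ∀ (d a : ℕ) (ha : a + d < k),
      (∀ c (hc : c < k), a ≤ c → c ≤ a + d → (i, (⟨c, hc⟩ : Fin k)) ∈ B) →
      Relation.ReflTransGen (gridRel k B) (i, ⟨a, by omega⟩) (i, ⟨a + d, ha⟩) := by
  intro d
  induction d with
  | zero => intro a ha _; exact Relation.ReflTransGen.refl
  | succ m ih =>
    intro a ha hmem
    have h1 : a + m < k := by omega
    have step : gridRel k B (i, ⟨a + m, h1⟩) (i, ⟨a + (m + 1), ha⟩) := by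
      refine ⟨grid_adj_right (by simp only [Fin.val_mk]; omega), hmem _ _ (by omega) (by omega),
        hmem _ _ (by omega) (by omega)⟩
    exact Relation.ReflTransGen.tail (ih a h1 (fun c hc h1 h2 => hmem c hc h1 (by omega))) step

lemma col_rtg {B : Set (Fin k × Fin k)} (j : Fin k) :
    ∀ (d a : ℕ) (ha : a + d < k),
      (∀ c (hc : c < k), a ≤ c → c ≤ a + d → ((⟨c, hc⟩ : Fin k), j) ∈ B) →
      Relation.ReflTransGen (gridRel k B) (⟨a, by omega⟩, j) (⟨a + d, ha⟩, j) := by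
  intro d
  induction d with
  | zero => intro a ha _; exact Relation.ReflTransGen.refl
  | succ m ih =>
    intro a ha hmem
    have h1 : a + m < k := by omega
    have step : gridRel k B (⟨a + m, h1⟩, j) (⟨a + (m + 1), ha⟩, j) := by
      refine ⟨grid_adj_down (by simp only [Fin.val_mk]; omega), hmem _ _ (by omega) (by omega),
        hmem _ _ (by omega) (by omega)⟩
    exact Relation.ReflTransGen.tail (ih a h1 (fun c hc h1 h2 => hmem c hc h1 (by omega))) step

/-- Connect two cells in the same row when all intermediate cells belong to `B`. -/
lemma row_rtg' {B : Set (Fin k × Fin k)} {i a b : Fin k}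
    (hmem : ∀ c : Fin k, min (a:ℕ) (b:ℕ) ≤ c → (c:ℕ) ≤ max (a:ℕ) (b:ℕ) → (i, c) ∈ B) :
    Relation.ReflTransGen (gridRel k B) (i, a) (i, b) := by
  rcases le_total (a:ℕ) (b:ℕ) with h | h
  · have := row_rtg (B := B) i ((b:ℕ) - a) a (by omega)
      (fun c hc h1 h2 => hmem ⟨c, hc⟩ (by simp; omega) (by simp; omega))
    have ha : ((a:ℕ) + ((b:ℕ) - (a:ℕ))) = (b:ℕ) := by omega
    convert this using 2 <;> simp [Fin.ext_iff] <;> omega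
  · have := row_rtg (B := B) i ((a:ℕ) - b) b (by omega)
      (fun c hc h1 h2 => hmem ⟨c, hc⟩ (by simp; omega) (by simp; omega))
    have base := (@Relation.ReflTransGen.symmetric _ _ ⟨fun _ _ h => gridRel_symm h⟩).symm _ _ this
    convert base using 2 <;> simp [Fin.ext_iff] <;> omega

lemma col_rtg' {B : Set (Fin k × Fin k)} {j a b : Fin k}
    (hmem : ∀ c : Fin k, min (a:ℕ) (b:ℕ) ≤ c → (c:ℕ) ≤ max (a:ℕ) (b:ℕ) → (c, j) ∈ B) :
    Relation.ReflTransGen (gridRel k B) (a, j) (b, j) := by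
  rcases le_total (a:ℕ) (b:ℕ) with h | h
  · have := col_rtg (B := B) j ((b:ℕ) - a) a (by omega)
      (fun c hc h1 h2 => hmem ⟨c, hc⟩ (by simp; omega) (by simp; omega))
    have ha : ((a:ℕ) + ((b:ℕ) - (a:ℕ))) = (b:ℕ) := by omega
    convert this using 2 <;> simp [Fin.ext_iff] <;> omega
  · have := col_rtg (B := B) j ((a:ℕ) - b) b (by omega)
      (fun c hc h1 h2 => hmem ⟨c, hc⟩ (by simp; omega) (by simp; omega))
    have base := (@Relation.ReflTransGen.symmetric _ _ ⟨fun _ _ h => gridRel_symm h⟩).symm _ _ this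
    convert base using 2 <;> simp [Fin.ext_iff] <;> omega

section GridBramble
variable {k : ℕ}

def crossSet (k : ℕ) (i j : Fin k) : Set (Fin k × Fin k) :=
  {p | (p.1 = i ∧ (p.2:ℕ) < k - 1) ∨ (p.2 = j ∧ (p.1:ℕ) < k - 1)}

def lastRowSet (k : ℕ) : Set (Fin k × Fin k) := {p | (p.1:ℕ) = k - 1}

def lastColSet (k : ℕ) : Set (Fin k × Fin k) := {p | (p.2:ℕ) = k - 1 ∧ (p.1:ℕ) < k - 1}

def gridBramble (k : ℕ) : Set (Set (Fin k × Fin k)) :=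
  insert (lastRowSet k) (insert (lastColSet k)
    {C | ∃ i j : Fin k, (i:ℕ) < k - 1 ∧ (j:ℕ) < k - 1 ∧ C = crossSet k i j})

lemma connIn_lastRow : ConnIn (gridGraph k) (lastRowSet k) := by
  rintro ⟨u1, u2⟩ hu ⟨v1, v2⟩ hv
  simp only [lastRowSet, Set.mem_setOf_eq] at hu hv
  have h1 : u1 = v1 := Fin.ext (by omega)
  subst h1
  exact row_rtg' (fun c _ _ => hu)

lemma connIn_lastCol : ConnIn (gridGraph k) (lastColSet k) := by
  rintro ⟨u1, u2⟩ hu ⟨v1, v2⟩ hv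
  obtain ⟨hu1, hu2⟩ := hu
  obtain ⟨hv1, hv2⟩ := hv
  dsimp only at hu1 hu2 hv1 hv2
  have h1 : u2 = v2 := Fin.ext (by omega)
  subst h1
  exact col_rtg' (fun c hc1 hc2 =>
    ⟨hu1, show ((c, u2).1 : ℕ) < k - 1 by dsimp only; rw [le_max_iff] at hc2; omega⟩)

lemma connIn_cross {i j : Fin k} (hi : (i:ℕ) < k - 1) (hj : (j:ℕ) < k - 1) :
    ConnIn (gridGraph k) (crossSet k i j) := by
  have aux : ∀ u ∈ crossSet k i j,
      Relation.ReflTransGen (gridRel k (crossSet k i j)) u (i, j) := by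
    rintro ⟨u1, u2⟩ hu
    rcases hu with ⟨h1, h2⟩ | ⟨h1, h2⟩ <;> dsimp only at h1 h2
    · subst h1
      exact row_rtg' (fun c hc1 hc2 => Or.inl ⟨rfl,
        show ((u1, c).2 : ℕ) < k - 1 by dsimp only; rw [le_max_iff] at hc2; omega⟩)
    · subst h1
      exact col_rtg' (fun c hc1 hc2 => Or.inr ⟨rfl,
        show ((c, u2).1 : ℕ) < k - 1 by dsimp only; rw [le_max_iff] at hc2; omega⟩)
  intro u hu v hv
  exact (aux u hu).trans ((@Relation.ReflTransGen.symmetric _ _ ⟨fun _ _ h => gridRel_symm h⟩).symm _ _ (aux v hv))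

lemma gridBramble_conn (hk : 2 ≤ k) : ∀ B ∈ gridBramble k, ConnIn (gridGraph k) B := by
  rintro B (rfl | rfl | ⟨i, j, hi, hj, rfl⟩)
  · exact connIn_lastRow
  · exact connIn_lastCol
  · exact connIn_cross hi hj

lemma gridBramble_nonempty (hk : 2 ≤ k) : ∀ B ∈ gridBramble k, B.Nonempty := by
  have h0 : 0 < k := by omega
  rintro B (rfl | rfl | ⟨i, j, hi, hj, rfl⟩)
  · exact ⟨(⟨k - 1, by omega⟩, ⟨0, h0⟩), by simp [lastRowSet]⟩
  · exact ⟨(⟨0, h0⟩, ⟨k - 1, by omega⟩), by simp [lastColSet]; omega⟩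
  · exact ⟨(i, j), Or.inl ⟨rfl, hj⟩⟩

lemma gridBramble_touch (hk : 2 ≤ k) : ∀ B ∈ gridBramble k, ∀ C ∈ gridBramble k,
    (B ∩ C).Nonempty ∨ ∃ u ∈ B, ∃ v ∈ C, (gridGraph k).Adj u v := by
  have h0 : 0 < k := by omega
  have hl : k - 1 < k := by omega
  have hp : k - 2 < k := by omega
  have hplt : ((⟨k-2, hp⟩ : Fin k) : ℕ) < k - 1 := by simp only [Fin.val_mk]; omega
  have hadj : ∀ c : Fin k, (gridGraph k).Adj (⟨k-2, hp⟩, c) (⟨k-1, hl⟩, c) :=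
    fun c => grid_adj_down (by simp only [Fin.val_mk]; omega)
  have hadjr : ∀ c : Fin k, (gridGraph k).Adj (c, ⟨k-2, hp⟩) (c, ⟨k-1, hl⟩) :=
    fun c => grid_adj_right (by simp only [Fin.val_mk]; omega)
  rintro B (rfl | rfl | ⟨i, j, hi, hj, rfl⟩) C (rfl | rfl | ⟨i', j', hi', hj', rfl⟩)
  · exact Or.inl ⟨(⟨k-1, hl⟩, ⟨0, h0⟩), rfl, rfl⟩
  · exact Or.inr ⟨(⟨k-1, hl⟩, ⟨k-1, hl⟩), rfl,
      (⟨k-2, hp⟩, ⟨k-1, hl⟩), ⟨rfl, hplt⟩, (hadj _).symm⟩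
  · exact Or.inr ⟨(⟨k-1, hl⟩, j'), rfl, (⟨k-2, hp⟩, j'), Or.inr ⟨rfl, hplt⟩, (hadj _).symm⟩
  · exact Or.inr ⟨(⟨k-2, hp⟩, ⟨k-1, hl⟩), ⟨rfl, hplt⟩, (⟨k-1, hl⟩, ⟨k-1, hl⟩), rfl, hadj _⟩
  · exact Or.inl ⟨(⟨0, h0⟩, ⟨k-1, hl⟩), ⟨rfl, by simp only [Fin.val_mk]; omega⟩,
      ⟨rfl, by simp only [Fin.val_mk]; omega⟩⟩
  · exact Or.inr ⟨(i', ⟨k-1, hl⟩), ⟨rfl, hi'⟩, (i', ⟨k-2, hp⟩),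
      Or.inl ⟨rfl, hplt⟩, (hadjr _).symm⟩
  · exact Or.inr ⟨(⟨k-2, hp⟩, j), Or.inr ⟨rfl, hplt⟩, (⟨k-1, hl⟩, j), rfl, hadj _⟩
  · exact Or.inr ⟨(i, ⟨k-2, hp⟩), Or.inl ⟨rfl, hplt⟩, (i, ⟨k-1, hl⟩), ⟨rfl, hi⟩, hadjr _⟩
  · exact Or.inl ⟨(i, j'), Or.inl ⟨rfl, hj'⟩, Or.inr ⟨rfl, hi⟩⟩

lemma gridBramble_order (hk : 2 ≤ k) (S : Finset (Fin k × Fin k))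
    (hS : ∀ B ∈ gridBramble k, ∃ v ∈ B, v ∈ S) : k + 1 ≤ S.card := by
  classical
  obtain ⟨vR, hvR, hvRS⟩ := hS _ (Set.mem_insert _ _)
  obtain ⟨vC, hvC, hvCS⟩ := hS _ (Set.mem_insert_of_mem _ (Set.mem_insert _ _))
  have hvR' : ((vR.1 : ℕ) = k - 1) := hvR
  obtain ⟨hvC1, hvC2⟩ : ((vC.2 : ℕ) = k - 1) ∧ ((vC.1 : ℕ) < k - 1) := hvC
  set S' := S.filter (fun p => (p.1:ℕ) < k - 1 ∧ (p.2:ℕ) < k - 1) with hS'def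
  have hcard' : k - 1 ≤ S'.card := by
    by_contra hcon
    push_neg at hcon
    have missing : ∀ g : Fin k × Fin k → Fin k,
        ∃ i : Fin k, (i:ℕ) < k - 1 ∧ i ∉ S'.image g := by
      intro g
      by_contra hmiss
      push_neg at hmiss
      have hsub : (Finset.univ.filter (fun i : Fin k => (i:ℕ) < k - 1)) ⊆ S'.image g := by
        intro i hi
        exact hmiss i (Finset.mem_filter.mp hi).2
      have h1 : k - 1 ≤ (Finset.univ.filter (fun i : Fin k => (i:ℕ) < k - 1)).card := by
        have := Finset.card_le_card_of_injOn
          (f := fun m : Fin (k-1) => (⟨(m : ℕ), by omega⟩ : Fin k))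
          (s := Finset.univ) (t := Finset.univ.filter (fun i : Fin k => (i:ℕ) < k - 1))
          (fun m _ => Finset.mem_filter.mpr ⟨Finset.mem_univ _, m.2⟩)
          (fun a _ b _ hab => by
            have : (a : ℕ) = b := by
              have := congrArg Fin.val hab
              simpa using this
            exact Fin.ext this)

        simpa using this
      have h2 := Finset.card_le_card hsub
      have h3 := Finset.card_image_le (s := S') (f := g)
      omega
    obtain ⟨i0, hi0, hi0m⟩ := missing Prod.fst
    obtain ⟨j0, hj0, hj0m⟩ := missing Prod.snd
    obtain ⟨v, hv, hvS⟩ := hS (crossSet k i0 j0)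
      (Set.mem_insert_of_mem _ (Set.mem_insert_of_mem _ ⟨i0, j0, hi0, hj0, rfl⟩))
    rcases hv with ⟨h1, h2⟩ | ⟨h1, h2⟩
    · apply hi0m
      refine Finset.mem_image.mpr ⟨v, Finset.mem_filter.mpr ⟨hvS, ?_, h2⟩, h1⟩
      rw [h1]; exact hi0
    · apply hj0m
      refine Finset.mem_image.mpr ⟨v, Finset.mem_filter.mpr ⟨hvS, h2, ?_⟩, h1⟩
      rw [h1]; exact hj0
  have hRnot : vR ∉ S' := by
    intro h
    have := (Finset.mem_filter.mp h).2.1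
    omega
  have hCnot : vC ∉ S' := by
    intro h
    have := (Finset.mem_filter.mp h).2.2
    omega
  have hRC : vR ≠ vC := by
    intro h
    rw [h] at hvR'
    omega
  have hsub : insert vR (insert vC S') ⊆ S := by
    intro x hx
    rcases Finset.mem_insert.mp hx with rfl | hx
    · exact hvRS
    rcases Finset.mem_insert.mp hx with rfl | hx
    · exact hvCS
    · exact (Finset.mem_filter.mp hx).1
  have hcardins : (insert vR (insert vC S')).card = S'.card + 2 := by
    rw [Finset.card_insert_of_notMem (by
      simp only [Finset.mem_insert]
      push_neg
      exact ⟨hRC, hRnot⟩),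
      Finset.card_insert_of_notMem hCnot]
  have := Finset.card_le_card hsub
  omega

end GridBramble

section Upper
variable {k : ℕ}

lemma pathGraph_isBridge (n : ℕ) {u v : Fin n} (h : (u:ℕ) + 1 = (v:ℕ)) :
    (SimpleGraph.pathGraph n).IsBridge s(u, v) := by
  have hadj : (SimpleGraph.pathGraph n).Adj u v := SimpleGraph.pathGraph_adj.mpr (Or.inl h)
  rw [SimpleGraph.isBridge_iff]
  intro hr
  have hcl : ∀ x y : Fin n,
      ((SimpleGraph.pathGraph n) \ SimpleGraph.fromEdgeSet {s(u, v)}).Adj x y →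
      (x:ℕ) ≤ u → (y:ℕ) ≤ u := by
    intro x y hxy hx
    rw [SimpleGraph.sdiff_adj] at hxy
    obtain ⟨hxy1, hxy2⟩ := hxy
    rw [SimpleGraph.pathGraph_adj] at hxy1
    rcases hxy1 with h1 | h1
    · by_contra hy
      have hx' : x = u := Fin.ext (by omega)
      have hy' : y = v := Fin.ext (by omega)
      subst hx'; subst hy'
      exact hxy2 ((SimpleGraph.fromEdgeSet_adj _).mpr ⟨Set.mem_singleton _, hadj.ne⟩)
    · omega
  have := reach_closed hcl hr (le_refl (u:ℕ))
  omega

lemma pathGraph_isAcyclic (n : ℕ) : (SimpleGraph.pathGraph n).IsAcyclic := by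
  rw [SimpleGraph.isAcyclic_iff_forall_edge_isBridge]
  intro e he
  induction e with
  | h u v =>
    rw [SimpleGraph.mem_edgeSet, SimpleGraph.pathGraph_adj] at he
    rcases he with h | h
    · exact pathGraph_isBridge n h
    · rw [Sym2.eq_swap]
      exact pathGraph_isBridge n h

lemma pathGraph_isTree (n : ℕ) (h : 0 < n) : (SimpleGraph.pathGraph n).IsTree := by
  obtain ⟨m, rfl⟩ : ∃ m, n = m + 1 := ⟨n - 1, by omega⟩
  exact ⟨SimpleGraph.pathGraph_connected m, pathGraph_isAcyclic _⟩

lemma induce_interval_connected (n a b : ℕ) (hab : a ≤ b) (hb : b < n) :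
    ((SimpleGraph.pathGraph n).induce {i : Fin n | a ≤ (i:ℕ) ∧ (i:ℕ) ≤ b}).Connected := by
  set S := {i : Fin n | a ≤ (i:ℕ) ∧ (i:ℕ) ≤ b} with hSdef
  have hbS : (⟨b, hb⟩ : Fin n) ∈ S := ⟨hab, le_refl b⟩
  have key : ∀ d : ℕ, ∀ x : S, b - (x.val : ℕ) = d →
      ((SimpleGraph.pathGraph n).induce S).Reachable x ⟨⟨b, hb⟩, hbS⟩ := by
    intro d
    induction d with
    | zero =>
      intro x hx
      have hxb : (x.val : ℕ) = b := by
        have := x.2.2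
        omega
      have : x = ⟨⟨b, hb⟩, hbS⟩ := Subtype.ext (Fin.ext hxb)
      rw [this]
    | succ m ih =>
      intro x hx
      have hxb : ((x.val : Fin n) : ℕ) < b := by omega
      have hx1 : ((x.val : Fin n) : ℕ) + 1 < n := by omega
      have hmem : (⟨(x.val : Fin n) + 1, hx1⟩ : Fin n) ∈ S := by
        constructor
        · simp only [Fin.val_mk]
          have := x.2.1
          omega
        · simp only [Fin.val_mk]
          omega
      have hadj : ((SimpleGraph.pathGraph n).induce S).Adj x ⟨⟨(x.val : Fin n) + 1, hx1⟩, hmem⟩ := by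
        apply SimpleGraph.comap_adj.mpr
        exact SimpleGraph.pathGraph_adj.mpr (Or.inl rfl)
      exact (hadj.reachable).trans (ih ⟨⟨(x.val : Fin n) + 1, hx1⟩, hmem⟩ (by
        simp only [Fin.val_mk]
        omega))
  haveI : Nonempty S := ⟨⟨_, hbS⟩⟩
  exact ⟨fun x y => (key _ x rfl).trans ((key _ y rfl).symm)⟩

def ordG (k : ℕ) (p : Fin k × Fin k) : ℕ := (p.1 : ℕ) * k + (p.2 : ℕ)

lemma ordG_lt (p : Fin k × Fin k) : ordG k p < k * k := by
  have h1 : (p.1 : ℕ) + 1 ≤ k := p.1.2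
  have h2 := p.2.2
  have h3 : ((p.1 : ℕ) + 1) * k ≤ k * k := Nat.mul_le_mul_right k h1
  have h4 : ((p.1 : ℕ) + 1) * k = (p.1 : ℕ) * k + k := by ring
  unfold ordG
  omega

lemma ordG_inj {p q : Fin k × Fin k} (h : ordG k p = ordG k q) : p = q := by
  unfold ordG at h
  have hp2 := p.2.2
  have hq2 := q.2.2
  have h1 : (p.1 : ℕ) = (q.1 : ℕ) := by
    rcases Nat.lt_trichotomy (p.1 : ℕ) (q.1 : ℕ) with hlt | he | hgt
    · have hx : ((p.1:ℕ) + 1) * k ≤ (q.1:ℕ) * k := Nat.mul_le_mul_right k hlt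
      have hy : ((p.1:ℕ) + 1) * k = (p.1:ℕ) * k + k := by ring
      omega
    · exact he
    · have hx : ((q.1:ℕ) + 1) * k ≤ (p.1:ℕ) * k := Nat.mul_le_mul_right k hgt
      have hy : ((q.1:ℕ) + 1) * k = (q.1:ℕ) * k + k := by ring
      omega
  have h1' : (p.1 : ℕ) * k = (q.1 : ℕ) * k := by rw [h1]
  have h2 : (p.2 : ℕ) = (q.2 : ℕ) := by omega
  exact Prod.ext (Fin.ext h1) (Fin.ext h2)

def gridBag (k : ℕ) (t : Fin (k * k)) : Finset (Fin k × Fin k) :=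
  Finset.univ.filter (fun v => (t:ℕ) ≤ ordG k v ∧ ordG k v ≤ (t:ℕ) + k)

lemma mem_gridBag {t : Fin (k * k)} {v : Fin k × Fin k} :
    v ∈ gridBag k t ↔ (t:ℕ) ≤ ordG k v ∧ ordG k v ≤ (t:ℕ) + k := by
  simp [gridBag]

lemma gridBag_card (t : Fin (k * k)) : (gridBag k t).card ≤ k + 1 := by
  have h := Finset.card_le_card_of_injOn (f := ordG k)
    (s := gridBag k t) (t := Finset.Icc (t:ℕ) ((t:ℕ) + k))
    (fun v hv => Finset.mem_Icc.mpr (mem_gridBag.mp hv))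
    (fun a _ b _ hab => ordG_inj hab)
  rw [Nat.card_Icc] at h
  omega

end Upper


section Final
variable {k : ℕ}

lemma grid_decomp (k : ℕ) (hk : 2 ≤ k) :
    IsTreeDecomp (gridGraph k) (SimpleGraph.pathGraph (k*k)) (gridBag k) := by
  refine ⟨pathGraph_isTree _ (Nat.mul_pos (by omega) (by omega)), ?_, ?_, ?_⟩
  · intro v
    exact ⟨⟨ordG k v, ordG_lt v⟩, mem_gridBag.mpr (by simp only [Fin.val_mk]; omega)⟩
  · intro u v huv
    obtain ⟨hne, hrel⟩ := huv
    have key : ∀ a b : Fin k × Fin k,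
        ((a.1 = b.1 ∧ (a.2:ℕ)+1 = (b.2:ℕ)) ∨ ((a.1:ℕ)+1 = (b.1:ℕ) ∧ a.2 = b.2)) →
        ordG k b = ordG k a + 1 ∨ ordG k b = ordG k a + k := by
      rintro a b (⟨h1, h2⟩ | ⟨h1, h2⟩)
      · left; unfold ordG; rw [h1]; omega
      · right; unfold ordG
        have hx : (b.1:ℕ) * k = (a.1:ℕ) * k + k := by rw [← h1]; ring
        have hy : (a.2:ℕ) = (b.2:ℕ) := by rw [h2]
        omega
    rcases hrel with h | h
    · have hk' := key u v h
      refine ⟨⟨ordG k u, ordG_lt u⟩, mem_gridBag.mpr (by simp only [Fin.val_mk]; omega),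
        mem_gridBag.mpr (by simp only [Fin.val_mk]; omega)⟩
    · have hk' := key v u h
      refine ⟨⟨ordG k v, ordG_lt v⟩, mem_gridBag.mpr (by simp only [Fin.val_mk]; omega),
        mem_gridBag.mpr (by simp only [Fin.val_mk]; omega)⟩
  · intro v
    have hset : {i : Fin (k*k) | v ∈ gridBag k i} =
        {i : Fin (k*k) | ordG k v - k ≤ (i:ℕ) ∧ (i:ℕ) ≤ ordG k v} := by
      ext i
      simp only [Set.mem_setOf_eq, mem_gridBag]
      omega
    rw [hset]
    exact induce_interval_connected _ _ _ (by omega) (ordG_lt v)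

theorem treewidth_gridGraph' (k : ℕ) (hk : 2 ≤ k) : treewidth (gridGraph k) = k := by
  classical
  have hmem : k ∈ {w : ℕ | ∃ (n : ℕ) (T : SimpleGraph (Fin n))
      (bag : Fin n → Finset (Fin k × Fin k)),
      IsTreeDecomp (gridGraph k) T bag ∧ ∀ i, (bag i).card ≤ w + 1} :=
    ⟨k*k, SimpleGraph.pathGraph (k*k), gridBag k, grid_decomp k hk, fun i => by
      have := gridBag_card i; omega⟩
  have hlow : ∀ w, (∃ (n : ℕ) (T : SimpleGraph (Fin n))
      (bag : Fin n → Finset (Fin k × Fin k)),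
      IsTreeDecomp (gridGraph k) T bag ∧ ∀ i, (bag i).card ≤ w + 1) → k ≤ w := by
    rintro w ⟨n, T, bag, hdec, hbag⟩
    by_contra hcon
    push_neg at hcon
    refine bramble_bound (gridBramble_conn hk) (gridBramble_nonempty hk)
      (gridBramble_touch hk) hdec (fun i => ?_)
    by_contra hb
    push_neg at hb
    have horder := gridBramble_order hk (bag i) (fun B hB => hb B hB)
    have := hbag i
    omega
  unfold treewidth
  apply le_antisymm
  · exact Nat.sInf_le hmem
  · exact hlow _ (Nat.sInf_mem (⟨k, hmem⟩ : Set.Nonempty _))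

end Final

/-- For every `k ≥ 2`, the `k × k` grid graph has treewidth exactly `k`. -/
theorem treewidth_gridGraph (k : ℕ) (hk : 2 ≤ k) : treewidth (gridGraph k) = k :=
  treewidth_gridGraph' k hk
end

section
/- Let G = (V, E) be a finite simple graph, let m ≥ 1, and for each vertex v ∈ V let H_v be a finite simple graph on at most m vertices, with the vertex sets of the H_v pairwise disjoint. Let G' be any graph whose vertex set is the disjoint union of the vertex sets of the H_v, whose edge set contains all edges of each H_v, and whose remaining edges are as follows: for each edge {u, v} ∈ E there is exactly one edge of G' joining some vertex of H_u to some vertex of H_v (and there are no other edges). Then pw(G') + 1 ≤ m · (pw(G) + 1); in particular pw(G') ≤ m · (pw(G) + 1) − 1. -/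
lemma pathGraph_one_eq_bot : SimpleGraph.pathGraph 1 = ⊥ := by
  ext u v
  simp [SimpleGraph.pathGraph_adj]

lemma pw_set_nonempty {V : Type} [Fintype V] (G : SimpleGraph V) :
    {w : ℕ | ∃ (n : ℕ) (bag : Fin n → Finset V),
      IsTreeDecomp G (SimpleGraph.pathGraph n) bag ∧ ∀ i, (bag i).card ≤ w + 1}.Nonempty := by
  refine ⟨Fintype.card V, 1, fun _ => Finset.univ, ⟨?_, ?_, ?_, ?_⟩, ?_⟩
  · constructor
    · exact SimpleGraph.pathGraph_connected 0
    · rw [pathGraph_one_eq_bot]; exact SimpleGraph.isAcyclic_bot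
  · exact fun v => ⟨0, Finset.mem_univ v⟩
  · exact fun u v _ => ⟨0, Finset.mem_univ u, Finset.mem_univ v⟩
  · intro v
    rw [SimpleGraph.connected_iff]
    refine ⟨fun a b => ?_, ⟨⟨0, Finset.mem_univ v⟩⟩⟩
    have : a = b := Subsingleton.elim a b
    exact this ▸ SimpleGraph.Reachable.refl a
  · intro i; exact Nat.le_succ_of_le (Finset.card_le_univ _)

/-- Replace every vertex `v` of a finite simple graph `G` by a finite simple graph `H v` on at
most `m ≥ 1` vertices (with pairwise disjoint vertex sets), keeping all edges of each `H v`,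
and, for each edge `{u, v}` of `G`, adding exactly one edge between some vertex of `H u` and
some vertex of `H v` (and no other edges). Then `pw(G') + 1 ≤ m * (pw(G) + 1)`; in particular
`pw(G') ≤ m * (pw(G) + 1) - 1`. -/
theorem pathwidth_blowup {V : Type} [Fintype V] (G : SimpleGraph V) (m : ℕ) (hm : 1 ≤ m)
    {W : V → Type} [∀ v, Fintype (W v)] (hW : ∀ v, Fintype.card (W v) ≤ m)
    (H : ∀ v, SimpleGraph (W v)) (G' : SimpleGraph (Σ v : V, W v))
    (hintra : ∀ (v : V) (x y : W v),
      G'.Adj ⟨v, x⟩ ⟨v, y⟩ ↔ (H v).Adj x y)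
    (hcross : ∀ u v : V, u ≠ v → G.Adj u v →
      ∃! p : W u × W v, G'.Adj ⟨u, p.1⟩ ⟨v, p.2⟩)
    (hnone : ∀ u v : V, u ≠ v → ¬ G.Adj u v →
      ∀ (x : W u) (y : W v), ¬ G'.Adj ⟨u, x⟩ ⟨v, y⟩) :
    pathwidth G' + 1 ≤ m * (pathwidth G + 1) ∧
    pathwidth G' ≤ m * (pathwidth G + 1) - 1 := by
  set wG := pathwidth G with hwG
  have hmem : wG ∈ {w : ℕ | ∃ (n : ℕ) (bag : Fin n → Finset V),
      IsTreeDecomp G (SimpleGraph.pathGraph n) bag ∧ ∀ i, (bag i).card ≤ w + 1} :=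
    Nat.sInf_mem (pw_set_nonempty G)
  obtain ⟨n, bag, hd, hcard⟩ := hmem
  set bag' : Fin n → Finset (Σ v : V, W v) :=
    fun i => (bag i).sigma (fun v => (Finset.univ : Finset (W v))) with hbag'
  have hmem' : ∀ (i : Fin n) (v : V) (x : W v), (⟨v, x⟩ : Σ v, W v) ∈ bag' i ↔ v ∈ bag i := by
    intro i v x
    simp [hbag', Finset.mem_sigma]
  have hdecomp : IsTreeDecomp G' (SimpleGraph.pathGraph n) bag' := by
    refine ⟨hd.1, ?_, ?_, ?_⟩
    · rintro ⟨v, x⟩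
      obtain ⟨i, hi⟩ := hd.2.1 v
      exact ⟨i, (hmem' i v x).2 hi⟩
    · rintro ⟨u, x⟩ ⟨v, y⟩ hadj
      by_cases h : u = v
      · subst h
        obtain ⟨i, hi⟩ := hd.2.1 u
        exact ⟨i, (hmem' i u x).2 hi, (hmem' i u y).2 hi⟩
      · have hG : G.Adj u v := by
          by_contra h'
          exact hnone u v h h' x y hadj
        obtain ⟨i, hu, hv⟩ := hd.2.2.1 u v hG
        exact ⟨i, (hmem' i u x).2 hu, (hmem' i v y).2 hv⟩
    · rintro ⟨v, x⟩
      have hset : {i : Fin n | (⟨v, x⟩ : Σ v, W v) ∈ bag' i} = {i : Fin n | v ∈ bag i} := by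
        ext i; exact hmem' i v x
      rw [hset]
      exact hd.2.2.2 v
  have hcard' : ∀ i, (bag' i).card ≤ m * (wG + 1) := by
    intro i
    rw [hbag']
    calc ((bag i).sigma fun v => (Finset.univ : Finset (W v))).card
        = ∑ v ∈ bag i, Fintype.card (W v) := by
          rw [Finset.card_sigma]; rfl
      _ ≤ ∑ _v ∈ bag i, m := Finset.sum_le_sum (fun v _ => hW v)
      _ = (bag i).card * m := by rw [Finset.sum_const, smul_eq_mul]
      _ ≤ (wG + 1) * m := Nat.mul_le_mul_right m (hcard i)
      _ = m * (wG + 1) := Nat.mul_comm _ _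
  have hpos : 1 ≤ m * (wG + 1) := Nat.one_le_iff_ne_zero.2 (by positivity)
  have hle : pathwidth G' ≤ m * (wG + 1) - 1 := by
    apply Nat.sInf_le
    refine ⟨n, bag', hdecomp, fun i => ?_⟩
    have : m * (wG + 1) - 1 + 1 = m * (wG + 1) := by omega
    rw [this]
    exact hcard' i
  exact ⟨by omega, hle⟩
end
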